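/- There exists an instance of the pipeline intervention problem (with some edges non-malleable) for which the ex-ante maximin value is strictly greater than the ex-post maximin value: a 4-layer instance with budget B > 0 small enough and two symmetric starting nodes u₁, v₁ such that OPT_RMM ≥ (1/2)(1/8 + (1/2 + B/6)³) while OPT_MM < (1/2)(1/8 + (1/2 + B/6)³). -/

import Mathlib

open Matrix Finset

noncomputable section

/-- ℓ1 norm of a vector. -/
def l1 {w : ℕ} (x : Fin w → ℝ) : ℝ := ∑ i, |x i|

/-- ℓ∞ norm of a vector. -/
def linf {w : ℕ} (x : Fin w → ℝ) : ℝ := ⨆ i, |x i|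

/-- Left (column-)stochastic matrix: nonnegative entries, each column sums to 1. -/
def IsStoch {a b : ℕ} (M : Matrix (Fin a) (Fin b) ℝ) : Prop :=
  (∀ i j, 0 ≤ M i j) ∧ ∀ j, ∑ i, M i j = 1

/-- Probability vector. -/
def IsProb {w : ℕ} (D : Fin w → ℝ) : Prop := (∀ i, 0 ≤ D i) ∧ ∑ i, D i = 1

/-- Entrywise ℓ1 cost of modifying M0 into M. -/
def cost {a b : ℕ} (M M0 : Matrix (Fin a) (Fin b) ℝ) : ℝ := ∑ i, ∑ j, |M i j - M0 i j|

/-- The product M (n-1) * ⋯ * M 0 (so that `M 0` is applied first to a vector). -/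
def chainProd {n w : ℕ} (M : Fin n → Matrix (Fin w) (Fin w) ℝ) : Matrix (Fin w) (Fin w) ℝ :=
  ((List.ofFn M).reverse).prod

/- The 4-layer separation instance.  Layer 1 = {u₁ = 0, v₁ = 1};
layers 2,3 = {u = 0, v = 1, sink = 2}; layer 4 = {u₄ = 0 (reward 1), z = 1 (reward 0)}. -/

def M1init : Matrix (Fin 3) (Fin 2) ℝ := !![1/2, 0; 0, 1/2; 1/2, 1/2]
def M2init : Matrix (Fin 3) (Fin 3) ℝ := !![1/2, 0, 0; 0, 1/2, 0; 1/2, 1/2, 1]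
def M3init : Matrix (Fin 2) (Fin 3) ℝ := !![1/2, 1/2, 0; 1/2, 1/2, 1]

/-- Feasibility in the separation instance: stochasticity, the non-malleable
columns (those leaving the sink nodes x and y) are unchanged, and total cost ≤ B. -/
def FeasSep (B : ℝ) (M1 : Matrix (Fin 3) (Fin 2) ℝ) (M2 : Matrix (Fin 3) (Fin 3) ℝ)
    (M3 : Matrix (Fin 2) (Fin 3) ℝ) : Prop :=
  IsStoch M1 ∧ IsStoch M2 ∧ IsStoch M3 ∧
  (∀ i, M2 i 2 = M2init i 2) ∧ (∀ i, M3 i 2 = M3init i 2) ∧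
  cost M1 M1init + cost M2 M2init + cost M3 M3init ≤ B

/-- Expected reward of starting node j. -/
def valSep (M1 : Matrix (Fin 3) (Fin 2) ℝ) (M2 : Matrix (Fin 3) (Fin 3) ℝ)
    (M3 : Matrix (Fin 2) (Fin 3) ℝ) (j : Fin 2) : ℝ :=
  (![1, 0] : Fin 2 → ℝ) ⬝ᵥ M3.mulVec (M2.mulVec (M1.mulVec (Pi.single j 1)))

set_option maxHeartbeats 1000000 in
private lemma lem_caseA_final (c10 x y : ℝ) (h0 : 0 ≤ c10) (h1 : 0 ≤ x) (h2 : 0 ≤ y)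
    (hb : c10 + x + y ≤ 1)
    (Hi : 91/432 ≤ (1+c10)*(2+x)^2/32) (Hii : 91/432 ≤ y*(2+x)^2/32 + 1/8) : False := by
  rcases le_total x (3/5) with hx | hx
  · have key : (256:ℝ)/27 ≤ (2-x)*(2+x)^2 := by
      nlinarith [mul_nonneg (by linarith : (0:ℝ) ≤ 1 - c10 - x - y) (sq_nonneg (2+x))]
    nlinarith [mul_nonneg (mul_nonneg (by linarith : (0:ℝ) ≤ 2/3 - x)
        (by linarith : (0:ℝ) ≤ 2/3 - x)) (by linarith : (0:ℝ) ≤ x + 10/3),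
      mul_nonneg (mul_nonneg (by linarith : (0:ℝ) ≤ 3/5 - x)
        (by linarith : (0:ℝ) ≤ 3/5 - x)) (by linarith : (0:ℝ) ≤ x),
      sq_nonneg (x - 2/3), hx]
  · have key : (74:ℝ)/27 ≤ (1-x)*(2+x)^2 := by
      nlinarith [mul_nonneg (by linarith : (0:ℝ) ≤ 1 - c10 - x - y) (sq_nonneg (2+x)),
        mul_nonneg h0 (sq_nonneg (2+x))]
    nlinarith [mul_nonneg (by linarith : (0:ℝ) ≤ x - 3/5) (by linarith : (0:ℝ) ≤ x),
      sq_nonneg (x - 3/5)]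

set_option maxHeartbeats 1000000 in
set_option maxRecDepth 8000 in
private lemma lem_caseB_red (c10 c11 k c21 be : ℝ)
    (h0 : 0 ≤ c10) (h1 : 0 ≤ c11) (h2 : 0 ≤ k) (h3 : 0 ≤ c21) (h5 : 0 ≤ be)
    (hb : c10 + c11 + k + c21 + be ≤ 1)
    (Hi : 91/54 ≤ (1+c10)*(1+k*(1+be)))
    (Hii : 91/54 ≤ c11*(1+k*(1+be)) + (1+be)*(1+c21)) : False := by
  nlinarith [mul_nonneg h0 h2, mul_nonneg h2 h5, mul_nonneg h1 h2, mul_nonneg h5 h3,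
    mul_nonneg (mul_nonneg h1 h2) h5, mul_nonneg (mul_nonneg h0 h2) h5,
    sq_nonneg (k - 2*c11), sq_nonneg (k - be), sq_nonneg (c10 + c11 + k + c21 + be - 1),
    mul_nonneg h0 h5, mul_nonneg h0 h3, mul_nonneg h1 h3]

set_option maxHeartbeats 1600000 in
set_option maxRecDepth 8000 in
private lemma core (m00 m10 m01 m11 q00 q10 q01 q11 a b c10 c11 c20 c21 c3a c3b : ℝ)
    (hm00 : 0 ≤ m00) (hm10 : 0 ≤ m10) (hm01 : 0 ≤ m01) (hm11 : 0 ≤ m11)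
    (hq00 : 0 ≤ q00) (hq10 : 0 ≤ q10) (hq01 : 0 ≤ q01) (hq11 : 0 ≤ q11)
    (ha : 0 ≤ a) (hb : 0 ≤ b)
    (hc10 : 0 ≤ c10) (hc11 : 0 ≤ c11) (hc20 : 0 ≤ c20) (hc21 : 0 ≤ c21)
    (hc3a : 0 ≤ c3a) (hc3b : 0 ≤ c3b)
    (h1 : 2*m10 ≤ c10) (h2 : 2*(m00+m10) ≤ 1 + c10)
    (h3 : 2*m01 ≤ c11) (h4 : 2*(m01+m11) ≤ 1 + c11)
    (h5 : 2*q10 ≤ c20) (h6 : 2*(q00+q10) ≤ 1 + c20)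
    (h7 : 2*q01 ≤ c21) (h8 : 2*(q01+q11) ≤ 1 + c21)
    (h9 : 2*a ≤ 1 + c3a) (h10 : 2*b ≤ 1 + c3b)
    (hB : c10+c11+c20+c21+c3a+c3b ≤ 1)
    (hor : a*q01 + b*q11 ≤ a*q00 + b*q10)
    (hv0 : 91/432 ≤ m00*(a*q00+b*q10) + m10*(a*q01+b*q11))
    (hv1 : 91/432 ≤ m01*(a*q00+b*q10) + m11*(a*q01+b*q11)) : False := by
  set p0 : ℝ := a*q00 + b*q10 with hp0def
  set p1 : ℝ := a*q01 + b*q11 with hp1def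
  have hp0 : 0 ≤ p0 := by positivity
  have hp1 : 0 ≤ p1 := by positivity
  have S1 : (91:ℝ)/432 ≤ (1+c10)/2 * p0 := by
    nlinarith [mul_nonneg hm10 (by linarith : (0:ℝ) ≤ p0 - p1),
      mul_nonneg (by linarith : (0:ℝ) ≤ (1+c10)/2 - (m00+m10)) hp0]
  have S2 : (91:ℝ)/432 ≤ c11/2 * p0 + p1/2 := by
    nlinarith [mul_nonneg (by linarith : (0:ℝ) ≤ c11/2 - m01) (by linarith : (0:ℝ) ≤ p0 - p1),
      mul_nonneg (by linarith : (0:ℝ) ≤ (1+c11)/2 - (m01+m11)) hp1]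
  rcases le_total b a with hba | hab
  · have hAQ : p0 ≤ (1+c3a)/2 * ((1+c20)/2) := by
      nlinarith [mul_nonneg hq10 (by linarith : (0:ℝ) ≤ a - b),
        mul_nonneg (by linarith : (0:ℝ) ≤ (1+c3a)/2 - a) (by linarith : (0:ℝ) ≤ (1+c20)/2),
        mul_nonneg ha (by linarith : (0:ℝ) ≤ (1+c20)/2 - (q00+q10))]
    have hP1 : p1 ≤ (1+c3a)/2 * (c21/2) + (1+c3b)/2 * (1/2) := by
      nlinarith [mul_nonneg (by linarith : (0:ℝ) ≤ a - b) (by linarith : (0:ℝ) ≤ c21/2 - q01),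
        mul_nonneg hb (by linarith : (0:ℝ) ≤ (1+c21)/2 - (q01+q11)),
        mul_nonneg (by linarith : (0:ℝ) ≤ (1+c3a)/2 - a) (by linarith : (0:ℝ) ≤ c21/2),
        mul_nonneg (by linarith : (0:ℝ) ≤ (1+c3b)/2 - b) (by norm_num : (0:ℝ) ≤ (1:ℝ)/2)]
    have hAM : (1+c3a)/2 * ((1+c20)/2) ≤ (2+(c3a+c20))^2/16 := by
      nlinarith [sq_nonneg (c3a - c20)]
    have Hi : (91:ℝ)/432 ≤ (1+c10)*(2+(c3a+c20))^2/32 := by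
      have hstep : (1+c10)/2 * p0 ≤ (1+c10)/2 * ((2+(c3a+c20))^2/16) :=
        mul_le_mul_of_nonneg_left (le_trans hAQ hAM) (by linarith)
      linarith [hstep]
    have Hii : (91:ℝ)/432 ≤ (c11+c21+c3b)*(2+(c3a+c20))^2/32 + 1/8 := by
      have e1 : c11/2 * p0 ≤ c11 * (2+(c3a+c20))^2/32 := by
        have : c11/2 * p0 ≤ c11/2 * ((2+(c3a+c20))^2/16) :=
          mul_le_mul_of_nonneg_left (le_trans hAQ hAM) (by linarith)
        linarith
      have e2 : p1/2 ≤ c21*(2+(c3a+c20))^2/32 + c3b*(2+(c3a+c20))^2/32 + 1/8 := by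
        have b1 : (1+c3a)/2 * (c21/2) / 2 ≤ c21*(2+(c3a+c20))^2/32 := by
          nlinarith [mul_nonneg hc21 (mul_nonneg hc3a (by linarith : (0:ℝ) ≤ c3a + c20)),
            mul_nonneg hc21 hc20, mul_nonneg hc21 (sq_nonneg (c3a+c20)), mul_nonneg hc21 hc3a]
        have b2 : (1+c3b)/2 * (1/2) / 2 ≤ c3b*(2+(c3a+c20))^2/32 + 1/8 := by
          nlinarith [mul_nonneg hc3b (sq_nonneg (c3a+c20)),
            mul_nonneg hc3b (by linarith : (0:ℝ) ≤ c3a+c20)]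
        linarith [hP1]
      linarith [S2, e1, e2]
    exact lem_caseA_final c10 (c3a+c20) (c11+c21+c3b) hc10 (by linarith) (by linarith)
      (by linarith) Hi (by linarith [Hii])
  · have hP0 : p0 ≤ (1+c3a)/4 + (1+c3b)*c20/4 := by
      nlinarith [mul_nonneg (by linarith : (0:ℝ) ≤ b - a) (by linarith : (0:ℝ) ≤ c20/2 - q10),
        mul_nonneg ha (by linarith : (0:ℝ) ≤ (1+c20)/2 - (q00+q10)),
        mul_nonneg (by linarith : (0:ℝ) ≤ (1+c3a)/2 - a) (by norm_num : (0:ℝ) ≤ (1:ℝ)/2),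
        mul_nonneg (by linarith : (0:ℝ) ≤ (1+c3b)/2 - b) (by linarith : (0:ℝ) ≤ c20/2)]
    have hP1 : p1 ≤ (1+c3b)/2 * ((1+c21)/2) := by
      nlinarith [mul_nonneg hq01 (by linarith : (0:ℝ) ≤ b - a),
        mul_nonneg (by linarith : (0:ℝ) ≤ (1+c3b)/2 - b) (by linarith : (0:ℝ) ≤ (1+c21)/2),
        mul_nonneg hb (by linarith : (0:ℝ) ≤ (1+c21)/2 - (q01+q11))]
    have hE : (1+c3a)/4 + (1+c3b)*c20/4 ≤ (1+(c3a+c20)*(1+c3b))/4 := by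
      nlinarith [mul_nonneg hc3a hc3b]
    have Hi : (91:ℝ)/54 ≤ (1+c10)*(1+(c3a+c20)*(1+c3b)) := by
      have hstep : (1+c10)/2 * p0 ≤ (1+c10)/2 * ((1+(c3a+c20)*(1+c3b))/4) :=
        mul_le_mul_of_nonneg_left (le_trans hP0 hE) (by linarith)
      nlinarith [S1, hstep]
    have Hii : (91:ℝ)/54 ≤ c11*(1+(c3a+c20)*(1+c3b)) + (1+c3b)*(1+c21) := by
      have e1 : c11/2 * p0 ≤ c11 * (1+(c3a+c20)*(1+c3b))/8 := by
        have : c11/2 * p0 ≤ c11/2 * ((1+(c3a+c20)*(1+c3b))/4) :=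
          mul_le_mul_of_nonneg_left (le_trans hP0 hE) (by linarith)
        linarith
      have e2 : p1/2 ≤ (1+c3b)*(1+c21)/8 := by linarith [hP1]
      nlinarith [S2, e1, e2]
    exact lem_caseB_red c10 c11 (c3a+c20) c21 c3b hc10 hc11 (by linarith) hc21 hc3b
      (by linarith) Hi Hii

set_option maxHeartbeats 2000000 in
set_option maxRecDepth 8000 in
theorem stmt17 :
    ∃ B : ℝ, 0 < B ∧
      (∃ (A1 : Matrix (Fin 3) (Fin 2) ℝ) (A2 : Matrix (Fin 3) (Fin 3) ℝ)
         (A3 : Matrix (Fin 2) (Fin 3) ℝ) (C1 : Matrix (Fin 3) (Fin 2) ℝ)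
         (C2 : Matrix (Fin 3) (Fin 3) ℝ) (C3 : Matrix (Fin 2) (Fin 3) ℝ),
        FeasSep B A1 A2 A3 ∧ FeasSep B C1 C2 C3 ∧
        ∀ j : Fin 2,
          (1/2) * valSep A1 A2 A3 j + (1/2) * valSep C1 C2 C3 j
            ≥ (1/2) * (1/8 + (1/2 + B/6)^3)) ∧
      (∀ (M1 : Matrix (Fin 3) (Fin 2) ℝ) (M2 : Matrix (Fin 3) (Fin 3) ℝ)
         (M3 : Matrix (Fin 2) (Fin 3) ℝ), FeasSep B M1 M2 M3 →
        (⨅ j : Fin 2, valSep M1 M2 M3 j) < (1/2) * (1/8 + (1/2 + B/6)^3)) := by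
  refine ⟨1, one_pos, ?_, ?_⟩
  · -- ex-ante part
    refine ⟨!![2/3, 0; 0, 1/2; 1/3, 1/2], !![2/3, 0, 0; 0, 1/2, 0; 1/3, 1/2, 1],
      !![2/3, 1/2, 0; 1/3, 1/2, 1], !![1/2, 0; 0, 2/3; 1/2, 1/3],
      !![1/2, 0, 0; 0, 2/3, 0; 1/2, 1/3, 1], !![1/2, 2/3, 0; 1/2, 1/3, 1], ?_, ?_, ?_⟩
    · refine ⟨⟨?_, ?_⟩, ⟨?_, ?_⟩, ⟨?_, ?_⟩, ?_, ?_, ?_⟩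
      · intro i j; fin_cases i <;> fin_cases j <;> norm_num
      · intro j; fin_cases j <;> simp [Fin.sum_univ_succ] <;> norm_num
      · intro i j; fin_cases i <;> fin_cases j <;> norm_num
      · intro j; fin_cases j <;> simp [Fin.sum_univ_succ] <;> norm_num
      · intro i j; fin_cases i <;> fin_cases j <;> norm_num
      · intro j; fin_cases j <;> simp [Fin.sum_univ_succ] <;> norm_num
      · intro i; fin_cases i <;> norm_num [M2init] <;> rfl
      · intro i; fin_cases i <;> norm_num [M3init] <;> rfl
      · simp [cost, M1init, M2init, M3init, Fin.sum_univ_succ]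
        norm_num [abs_of_pos]
    · refine ⟨⟨?_, ?_⟩, ⟨?_, ?_⟩, ⟨?_, ?_⟩, ?_, ?_, ?_⟩
      · intro i j; fin_cases i <;> fin_cases j <;> norm_num
      · intro j; fin_cases j <;> simp [Fin.sum_univ_succ] <;> norm_num
      · intro i j; fin_cases i <;> fin_cases j <;> norm_num
      · intro j; fin_cases j <;> simp [Fin.sum_univ_succ] <;> norm_num
      · intro i j; fin_cases i <;> fin_cases j <;> norm_num
      · intro j; fin_cases j <;> simp [Fin.sum_univ_succ] <;> norm_num
      · intro i; fin_cases i <;> norm_num [M2init] <;> rfl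
      · intro i; fin_cases i <;> norm_num [M3init] <;> rfl
      · simp [cost, M1init, M2init, M3init, Fin.sum_univ_succ]
        norm_num [abs_of_pos]
    · intro j
      fin_cases j <;>
      · simp [valSep, Matrix.mulVec, dotProduct, Fin.sum_univ_succ, Pi.single_apply]
        norm_num
  · -- ex-post part
    intro M1 M2 M3 hfeas
    obtain ⟨hS1, hS2, hS3, hfix2, hfix3, hcost⟩ := hfeas
    have hrhs : (1/2) * (1/8 + (1/2 + (1:ℝ)/6)^3) = 91/432 := by norm_num
    rw [hrhs]
    have hbdd : BddBelow (Set.range (valSep M1 M2 M3)) := Finite.bddBelow_range _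
    rcases lt_or_ge (valSep M1 M2 M3 0) (91/432) with hlt | hge0
    · exact lt_of_le_of_lt (ciInf_le hbdd 0) hlt
    rcases lt_or_ge (valSep M1 M2 M3 1) (91/432) with hlt | hge1
    · exact lt_of_le_of_lt (ciInf_le hbdd 1) hlt
    exfalso
    -- entries
    set m00 := M1 0 0; set m10 := M1 1 0; set m01 := M1 0 1; set m11 := M1 1 1
    set q00 := M2 0 0; set q10 := M2 1 0; set q01 := M2 0 1; set q11 := M2 1 1
    set a := M3 0 0; set b := M3 0 1
    -- fixed column values
    have e02 : M2 0 2 = 0 := by rw [hfix2]; norm_num [M2init]; rfl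
    have e12 : M2 1 2 = 0 := by rw [hfix2]; norm_num [M2init]; rfl
    have e22 : M2 2 2 = 1 := by rw [hfix2]; norm_num [M2init]; rfl
    have e03 : M3 0 2 = 0 := by rw [hfix3]; norm_num [M3init]; rfl
    have e13 : M3 1 2 = 1 := by rw [hfix3]; norm_num [M3init]; rfl
    -- column sums
    have s10 : m00 + m10 + M1 2 0 = 1 := by
      have := hS1.2 0; rwa [Fin.sum_univ_three] at this
    have s11 : m01 + m11 + M1 2 1 = 1 := by
      have := hS1.2 1; rwa [Fin.sum_univ_three] at this
    have s20 : q00 + q10 + M2 2 0 = 1 := by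
      have := hS2.2 0; rwa [Fin.sum_univ_three] at this
    have s21 : q01 + q11 + M2 2 1 = 1 := by
      have := hS2.2 1; rwa [Fin.sum_univ_three] at this
    have s30 : a + M3 1 0 = 1 := by
      have := hS3.2 0; rwa [Fin.sum_univ_two] at this
    have s31 : b + M3 1 1 = 1 := by
      have := hS3.2 1; rwa [Fin.sum_univ_two] at this
    -- values expansion
    have ve0 : valSep M1 M2 M3 0 = m00*(a*q00+b*q10) + m10*(a*q01+b*q11) := by
      simp [valSep, Matrix.mulVec, dotProduct, Fin.sum_univ_succ, Pi.single_apply,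
        e02, e12, e03]
      ring
    have ve1 : valSep M1 M2 M3 1 = m01*(a*q00+b*q10) + m11*(a*q01+b*q11) := by
      simp [valSep, Matrix.mulVec, dotProduct, Fin.sum_univ_succ, Pi.single_apply,
        e02, e12, e03]
      ring
    rw [ve0] at hge0; rw [ve1] at hge1
    -- cost decomposition
    set c10 := |m00 - 1/2| + |m10 - 0| + |M1 2 0 - 1/2| with hc10d
    set c11 := |m01 - 0| + |m11 - 1/2| + |M1 2 1 - 1/2| with hc11d
    set c20 := |q00 - 1/2| + |q10 - 0| + |M2 2 0 - 1/2| with hc20d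
    set c21 := |q01 - 0| + |q11 - 1/2| + |M2 2 1 - 1/2| with hc21d
    set c3a := |a - 1/2| + |M3 1 0 - 1/2| with hc3ad
    set c3b := |b - 1/2| + |M3 1 1 - 1/2| with hc3bd
    have hcost1 : cost M1 M1init = c10 + c11 := by
      simp [cost, M1init, Fin.sum_univ_succ, hc10d, hc11d]; ring
    have hcost2 : cost M2 M2init = c20 + c21 := by
      simp [cost, M2init, Fin.sum_univ_succ, hc20d, hc21d, e02, e12, e22]; ring
    have hcost3 : cost M3 M3init = c3a + c3b := by
      simp [cost, M3init, Fin.sum_univ_succ, hc3ad, hc3bd, e03, e13]; ring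
    have hB : c10 + c11 + c20 + c21 + c3a + c3b ≤ 1 := by
      rw [hcost1, hcost2, hcost3] at hcost; linarith
    -- cost facts
    have habs := fun (x : ℝ) => abs_nonneg x
    have hc10n : 0 ≤ c10 := by positivity
    have hc11n : 0 ≤ c11 := by positivity
    have hc20n : 0 ≤ c20 := by positivity
    have hc21n : 0 ≤ c21 := by positivity
    have hc3an : 0 ≤ c3a := by positivity
    have hc3bn : 0 ≤ c3b := by positivity
    have f1 : 2*m10 ≤ c10 := by
      rw [hc10d]
      linarith [neg_abs_le (m00 - 1/2), le_abs_self (m10 - 0), neg_abs_le (M1 2 0 - 1/2)]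
    have f2 : 2*(m00+m10) ≤ 1 + c10 := by
      rw [hc10d]
      linarith [le_abs_self (m00 - 1/2), le_abs_self (m10 - 0), neg_abs_le (M1 2 0 - 1/2)]
    have f3 : 2*m01 ≤ c11 := by
      rw [hc11d]
      linarith [le_abs_self (m01 - 0), neg_abs_le (m11 - 1/2), neg_abs_le (M1 2 1 - 1/2)]
    have f4 : 2*(m01+m11) ≤ 1 + c11 := by
      rw [hc11d]
      linarith [le_abs_self (m01 - 0), le_abs_self (m11 - 1/2), neg_abs_le (M1 2 1 - 1/2)]
    have f5 : 2*q10 ≤ c20 := by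
      rw [hc20d]
      linarith [neg_abs_le (q00 - 1/2), le_abs_self (q10 - 0), neg_abs_le (M2 2 0 - 1/2)]
    have f6 : 2*(q00+q10) ≤ 1 + c20 := by
      rw [hc20d]
      linarith [le_abs_self (q00 - 1/2), le_abs_self (q10 - 0), neg_abs_le (M2 2 0 - 1/2)]
    have f7 : 2*q01 ≤ c21 := by
      rw [hc21d]
      linarith [le_abs_self (q01 - 0), neg_abs_le (q11 - 1/2), neg_abs_le (M2 2 1 - 1/2)]
    have f8 : 2*(q01+q11) ≤ 1 + c21 := by
      rw [hc21d]
      linarith [le_abs_self (q01 - 0), le_abs_self (q11 - 1/2), neg_abs_le (M2 2 1 - 1/2)]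
    have f9 : 2*a ≤ 1 + c3a := by
      rw [hc3ad]
      linarith [le_abs_self (a - 1/2), neg_abs_le (M3 1 0 - 1/2)]
    have f10 : 2*b ≤ 1 + c3b := by
      rw [hc3bd]
      linarith [le_abs_self (b - 1/2), neg_abs_le (M3 1 1 - 1/2)]
    have hm00 : 0 ≤ m00 := hS1.1 0 0
    have hm10 : 0 ≤ m10 := hS1.1 1 0
    have hm01 : 0 ≤ m01 := hS1.1 0 1
    have hm11 : 0 ≤ m11 := hS1.1 1 1
    have hq00 : 0 ≤ q00 := hS2.1 0 0
    have hq10 : 0 ≤ q10 := hS2.1 1 0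
    have hq01 : 0 ≤ q01 := hS2.1 0 1
    have hq11 : 0 ≤ q11 := hS2.1 1 1
    have ha : 0 ≤ a := hS3.1 0 0
    have hb : 0 ≤ b := hS3.1 0 1
    rcases le_total (a*q01 + b*q11) (a*q00 + b*q10) with hor | hor
    · exact core m00 m10 m01 m11 q00 q10 q01 q11 a b c10 c11 c20 c21 c3a c3b
        hm00 hm10 hm01 hm11 hq00 hq10 hq01 hq11 ha hb
        hc10n hc11n hc20n hc21n hc3an hc3bn
        f1 f2 f3 f4 f5 f6 f7 f8 f9 f10 hB hor hge0 hge1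
    · refine core m11 m01 m10 m00 q11 q01 q10 q00 b a c11 c10 c21 c20 c3b c3a
        hm11 hm01 hm10 hm00 hq11 hq01 hq10 hq00 hb ha
        hc11n hc10n hc21n hc20n hc3bn hc3an
        f3 (by linarith) f1 (by linarith) f7 (by linarith) f5 (by linarith) f10 f9
        (by linarith) (by linarith) ?_ ?_
      · rw [show m11*(b*q11+a*q01) + m01*(b*q10+a*q00)
            = m01*(a*q00+b*q10) + m11*(a*q01+b*q11) by ring]
        exact hge1
      · rw [show m10*(b*q11+a*q01) + m00*(b*q10+a*q00)
            = m00*(a*q00+b*q10) + m10*(a*q01+b*q11) by ring]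
        exact hge0


end
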